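/- Suppose E[V − τ] < 0, so that M_∞ is P-a.s. finite. If X : Ω → [0,∞) is a measurable random variable satisfying X ∘ θ = φ(X(·), ·) P-a.s., then X ≤ M_∞ P-a.s. -/

import Mathlib

open MeasureTheory Filter

noncomputable section

variable {Ω : Type*}

/-- ψ(y, ω) = max( max( y + V ω, σ ω + D ω + V ω ) − τ ω, 0 ). -/
def psi (σ D V τ : Ω → ℝ) (y : ℝ) (ω : Ω) : ℝ :=
  max (max (y + V ω) (σ ω + D ω + V ω) - τ ω) 0

/-- φ(x, ω): the one-step workload map, defined by its four cases:
x + σ − τ if x + σ − τ > 0 and x ≤ D; x − τ if x − τ > 0 and x > D;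
max(x + σ + V − τ, 0) if x + σ − τ ≤ 0 and x ≤ D; 0 if x − τ ≤ 0 and x > D. -/
def phi (σ D V τ : Ω → ℝ) (x : ℝ) (ω : Ω) : ℝ :=
  if x ≤ D ω then
    if 0 < x + σ ω - τ ω then x + σ ω - τ ω else max (x + σ ω + V ω - τ ω) 0
  else
    if 0 < x - τ ω then x - τ ω else 0

/-- S_j(ω) = σ(θ^{-j}ω) + D(θ^{-j}ω) + Σ_{i=1}^{j} V(θ^{-i}ω) − Σ_{i=1}^{j} τ(θ^{-i}ω),
where `θi` denotes the inverse of `θ`. -/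
def Sj (θi : Ω → Ω) (σ D V τ : Ω → ℝ) (j : ℕ) (ω : Ω) : ℝ :=
  σ (θi^[j] ω) + D (θi^[j] ω)
    + ∑ i ∈ Finset.Icc 1 j, V (θi^[i] ω)
    - ∑ i ∈ Finset.Icc 1 j, τ (θi^[i] ω)

/-- M_∞ = max(0, sup_{j ≥ 1} S_j) ∈ [0,∞]. -/
def Minf (θi : Ω → Ω) (σ D V τ : Ω → ℝ) (ω : Ω) : EReal :=
  max 0 (⨆ j : ℕ, ((Sj θi σ D V τ (j + 1) ω : ℝ) : EReal))

/-- The workload sequence Z_0^W = W, Z_{n+1}^W(ω) = φ(Z_n^W(ω), θⁿω). -/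
def Zseq (θf : Ω → Ω) (σ D V τ : Ω → ℝ) (W : Ω → ℝ) : ℕ → Ω → ℝ
  | 0 => W
  | n + 1 => fun ω => phi σ D V τ (Zseq θf σ D V τ W n ω) (θf^[n] ω)

/-- The majorizing sequence Y_0^Y = Y, Y_{n+1}^Y(ω) = ψ(Y_n^Y(ω), θⁿω). -/
def Yseq (θf : Ω → Ω) (σ D V τ : Ω → ℝ) (Y : Ω → ℝ) : ℕ → Ω → ℝ
  | 0 => Y
  | n + 1 => fun ω => psi σ D V τ (Yseq θf σ D V τ Y n ω) (θf^[n] ω)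

lemma phi_le_psi (σ D V τ : Ω → ℝ) (hV0 : ∀ ω, 0 ≤ V ω) (x : ℝ) (ω : Ω) :
    phi σ D V τ x ω ≤ psi σ D V τ x ω := by
  unfold phi psi
  have hV := hV0 ω
  split_ifs with h1 h2 h3
  · refine le_max_of_le_left ?_
    have h := le_max_right (x + V ω) (σ ω + D ω + V ω)
    linarith
  · apply max_le
    · refine le_max_of_le_left ?_
      have h := le_max_right (x + V ω) (σ ω + D ω + V ω)
      linarith
    · exact le_max_right _ _
  · refine le_max_of_le_left ?_
    have h := le_max_left (x + V ω) (σ ω + D ω + V ω)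
    linarith
  · exact le_max_right _ _

lemma psi_le (σ D V τ : Ω → ℝ) (y : ℝ) (η : Ω) :
    psi σ D V τ y η ≤ max (y + (V η - τ η)) (max 0 (σ η + D η + V η - τ η)) := by
  unfold psi
  apply max_le
  · rcases le_total (y + V η) (σ η + D η + V η) with h | h
    · rw [max_eq_right h]
      exact le_max_of_le_right (le_max_of_le_right (le_of_eq (by ring)))
    · rw [max_eq_left h]
      exact le_max_of_le_left (le_of_eq (by ring))
  · exact le_max_of_le_right (le_max_left _ _)


def psum (T : Ω → Ω) (g : Ω → ℝ) (n : ℕ) (ω : Ω) : ℝ := ∑ i ∈ Finset.range n, g (T^[i] ω)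

lemma psum_zero (T : Ω → Ω) (g : Ω → ℝ) (ω : Ω) : psum T g 0 ω = 0 := by simp [psum]

lemma psum_succ (T : Ω → Ω) (g : Ω → ℝ) (n : ℕ) (ω : Ω) :
    psum T g (n + 1) ω = psum T g n ω + g (T^[n] ω) := Finset.sum_range_succ _ _

lemma psum_succ' (T : Ω → Ω) (g : Ω → ℝ) (n : ℕ) (ω : Ω) :
    psum T g (n + 1) ω = g ω + psum T g n (T ω) := by
  unfold psum
  rw [Finset.sum_range_succ']
  simp only [Function.iterate_succ_apply, Function.iterate_zero_apply]
  ring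

lemma psum_measurable [MeasurableSpace Ω] {T : Ω → Ω} {g : Ω → ℝ}
    (hT : Measurable T) (hg : Measurable g) (n : ℕ) : Measurable (psum T g n) := by
  unfold psum
  exact Finset.measurable_sum _ fun i _ => hg.comp (hT.iterate i)

lemma psum_integrable [MeasurableSpace Ω] {P : Measure Ω} {T : Ω → Ω} {g : Ω → ℝ}
    (hT : MeasurePreserving T P P) (hg : Integrable g P) (n : ℕ) :
    Integrable (psum T g n) P := by
  unfold psum
  refine integrable_finset_sum _ fun i _ => ?_
  have := (MeasurePreserving.integrable_comp (hT.iterate i) hg.aestronglyMeasurable).2 hg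
  simpa [Function.comp_def] using this

def mplus (T : Ω → Ω) (g : Ω → ℝ) : ℕ → Ω → ℝ
  | 0 => fun _ => 0
  | N + 1 => fun ω => max (mplus T g N ω) (psum T g (N + 1) ω)

lemma mplus_nonneg (T : Ω → Ω) (g : Ω → ℝ) : ∀ N ω, 0 ≤ mplus T g N ω := by
  intro N
  induction N with
  | zero => intro ω; exact le_refl 0
  | succ N ih => intro ω; exact le_trans (ih ω) (le_max_left _ _)

lemma mplus_mono (T : Ω → Ω) (g : Ω → ℝ) (N : ℕ) (ω : Ω) :
    mplus T g N ω ≤ mplus T g (N + 1) ω := le_max_left _ _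

lemma psum_le_mplus (T : Ω → Ω) (g : Ω → ℝ) (n : ℕ) (ω : Ω) :
    psum T g n ω ≤ mplus T g n ω := by
  cases n with
  | zero => simp [psum_zero, mplus]
  | succ n => exact le_max_right _ _

lemma mplus_succ (T : Ω → Ω) (g : Ω → ℝ) (N : ℕ) (ω : Ω) :
    mplus T g (N + 1) ω = max 0 (g ω + mplus T g N (T ω)) := by
  induction N generalizing ω with
  | zero =>
    show max (mplus T g 0 ω) (psum T g 1 ω) = _
    rw [psum_succ']
    simp [mplus, psum_zero]
  | succ N ih =>
    show max (mplus T g (N + 1) ω) (psum T g (N + 2) ω) = _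
    rw [ih, psum_succ' T g (N + 1) ω, max_assoc]
    show max 0 (max (g ω + mplus T g N (T ω)) (g ω + psum T g (N + 1) (T ω))) = _
    rw [max_add_add_left]
    rfl

lemma mplus_measurable [MeasurableSpace Ω] {T : Ω → Ω} {g : Ω → ℝ}
    (hT : Measurable T) (hg : Measurable g) (N : ℕ) : Measurable (mplus T g N) := by
  induction N with
  | zero => exact measurable_const
  | succ N ih => exact Measurable.max ih (psum_measurable hT hg (N + 1))

lemma mplus_integrable [MeasurableSpace Ω] {P : Measure Ω} {T : Ω → Ω} {g : Ω → ℝ}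
    (hT : MeasurePreserving T P P) (hg : Integrable g P) (N : ℕ) :
    Integrable (mplus T g N) P := by
  induction N with
  | zero => exact show Integrable (fun _ => (0:ℝ)) P from integrable_zero _ _ _
  | succ N ih =>
    have := ih.sup (psum_integrable hT hg (N + 1))
    exact this

/-- Hopf's maximal ergodic lemma (Garsia's proof). -/
lemma hopf [MeasurableSpace Ω] (P : Measure Ω) [IsProbabilityMeasure P]
    {T : Ω → Ω} (hT : MeasurePreserving T P P) (hTe : MeasurableEmbedding T)
    {g : Ω → ℝ} (hgm : Measurable g) (hgi : Integrable g P) (N : ℕ) :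
    0 ≤ ∫ ω in {ω | 0 < mplus T g (N + 1) ω}, g ω ∂P := by
  set M : Ω → ℝ := mplus T g (N + 1) with hM
  set E : Set Ω := {ω | 0 < M ω} with hE
  have hMm : Measurable M := mplus_measurable hTe.measurable hgm (N + 1)
  have hEm : MeasurableSet E := measurableSet_lt measurable_const hMm
  have hMint : Integrable M P := mplus_integrable hT hgi (N + 1)
  have hMTint : Integrable (fun ω => M (T ω)) P := by
    have := (MeasurePreserving.integrable_comp hT hMint.aestronglyMeasurable).2 hMint
    simpa [Function.comp_def] using this
  have hzero : ∫ ω, (M ω - M (T ω)) ∂P = 0 := by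
    rw [integral_sub hMint hMTint]
    have : ∫ ω, M (T ω) ∂P = ∫ ω, M ω ∂P := hT.integral_comp hTe M
    linarith
  have key : ∀ ω ∈ E, M ω - M (T ω) ≤ g ω := by
    intro ω hω
    have hpos : 0 < M ω := hω
    have h1 : M ω = g ω + mplus T g N (T ω) := by
      have h := mplus_succ T g N ω
      rcases max_cases (0 : ℝ) (g ω + mplus T g N (T ω)) with ⟨he, _⟩ | ⟨he, _⟩
      · rw [hM, h, he] at hpos; exact absurd hpos (lt_irrefl 0)
      · rw [hM, h, he]
    have h2 : mplus T g N (T ω) ≤ M (T ω) := mplus_mono T g N (T ω)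
    linarith
  have hEc : ∫ ω in Eᶜ, (M ω - M (T ω)) ∂P ≤ 0 := by
    refine setIntegral_nonpos hEm.compl fun ω hω => ?_
    have h0 : ¬(0 < M ω) := hω
    have h1 : M ω = 0 := le_antisymm (not_lt.1 h0) (mplus_nonneg T g (N + 1) ω)
    have h2 : 0 ≤ M (T ω) := mplus_nonneg T g (N + 1) (T ω)
    linarith
  have hEle : ∫ ω in E, (M ω - M (T ω)) ∂P ≤ ∫ ω in E, g ω ∂P :=
    setIntegral_mono_on (hMint.sub hMTint).integrableOn hgi.integrableOn hEm key
  have hsplit := integral_add_compl hEm (hMint.sub hMTint)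
  simp only [Pi.sub_apply] at hsplit
  -- hsplit : ∫ in E + ∫ in Eᶜ = ∫ = 0
  rw [hzero] at hsplit
  linarith

lemma psum_add_const (T : Ω → Ω) (g : Ω → ℝ) (c : ℝ) (n : ℕ) (ω : Ω) :
    psum T (fun x => g x + c) n ω = psum T g n ω + n * c := by
  unfold psum
  rw [Finset.sum_add_distrib, Finset.sum_const, Finset.card_range, nsmul_eq_mul]

/-- If the integral of `g` is negative and `T` is ergodic, then the partial sums
`psum T g n` are a.s. bounded above. -/
lemma ae_bdd_psum [MeasurableSpace Ω] (P : Measure Ω) [IsProbabilityMeasure P]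
    {T : Ω → Ω} (hTerg : Ergodic T P) (hTe : MeasurableEmbedding T)
    {g : Ω → ℝ} (hgm : Measurable g) (hgi : Integrable g P) (hgneg : ∫ ω, g ω ∂P < 0) :
    ∀ᵐ ω ∂P, ∃ C : ℝ, ∀ n, psum T g n ω ≤ C := by
  have hT : MeasurePreserving T P P := hTerg.toMeasurePreserving
  set F : Set Ω := ⋂ C : ℕ, ⋃ n : ℕ, {ω | (C : ℝ) < psum T g n ω} with hF
  have hmemF : ∀ ω, ω ∈ F ↔ ∀ C : ℕ, ∃ n, (C : ℝ) < psum T g n ω := by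
    intro ω; simp [hF, Set.mem_iInter, Set.mem_iUnion]
  have hFm : MeasurableSet F := by
    refine MeasurableSet.iInter fun C => MeasurableSet.iUnion fun n => ?_
    exact measurableSet_lt measurable_const (psum_measurable hTe.measurable hgm n)
  have hinv : T ⁻¹' F = F := by
    ext ω
    rw [Set.mem_preimage, hmemF, hmemF]
    constructor
    · intro h C
      obtain ⟨C', hC'⟩ := exists_nat_ge ((C : ℝ) - g ω)
      obtain ⟨n, hn⟩ := h C'
      refine ⟨n + 1, ?_⟩
      rw [psum_succ']
      linarith
    · intro h C
      obtain ⟨C', hC'⟩ := exists_nat_ge ((C : ℝ) + g ω)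
      obtain ⟨n, hn⟩ := h C'
      have hC'0 : (0 : ℝ) ≤ (C' : ℝ) := Nat.cast_nonneg _
      cases n with
      | zero => rw [psum_zero] at hn; linarith
      | succ m =>
        rw [psum_succ'] at hn
        exact ⟨m, by linarith⟩
  rcases hTerg.toPreErgodic.ae_empty_or_univ hFm hinv with h | h
  · have h0 : P F = 0 := by
      have := measure_congr h; simpa using this
    rw [ae_iff]
    refine measure_mono_null ?_ h0
    intro ω hω
    simp only [Set.mem_setOf_eq] at hω
    push_neg at hω
    rw [hmemF]
    intro C
    exact hω (C : ℝ)
  · exfalso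
    have hPF : P F = 1 := by
      have := measure_congr h; simpa using this
    -- F is contained in the union of the sets where the maximal function is positive
    set Es : ℕ → Set Ω := fun N => {ω | 0 < mplus T g N ω} with hEs
    have hEsm : ∀ N, MeasurableSet (Es N) :=
      fun N => measurableSet_lt measurable_const (mplus_measurable hTe.measurable hgm N)
    have hEsmono : Monotone Es := by
      apply monotone_nat_of_le_succ
      intro N ω hω
      exact lt_of_lt_of_le hω (mplus_mono T g N ω)
    have hFsub : F ⊆ ⋃ N, Es N := by
      intro ω hω
      obtain ⟨n, hn⟩ := (hmemF ω).1 hω 0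
      simp only [Nat.cast_zero] at hn
      exact Set.mem_iUnion.2 ⟨n, lt_of_lt_of_le hn (psum_le_mplus T g n ω)⟩
    have hUnion1 : P (⋃ N, Es N) = 1 := by
      refine le_antisymm prob_le_one ?_
      rw [← hPF]; exact measure_mono hFsub
    have hUnivae : (⋃ N, Es N) =ᵐ[P] Set.univ := by
      rw [Filter.eventuallyEq_univ, mem_ae_iff]
      rw [prob_compl_eq_zero_iff (MeasurableSet.iUnion hEsm)]
      exact hUnion1
    have htend := tendsto_setIntegral_of_monotone hEsm hEsmono hgi.integrableOn
    have hlim : ∫ ω in ⋃ N, Es N, g ω ∂P = ∫ ω, g ω ∂P := by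
      rw [setIntegral_congr_set hUnivae, setIntegral_univ]
    have hnonneg : ∀ N, 0 ≤ ∫ ω in Es N, g ω ∂P := by
      intro N
      cases N with
      | zero =>
        have : Es 0 = ∅ := by
          ext ω; simp [hEs, mplus]
        rw [this]; simp
      | succ N => exact hopf P hT hTe hgm hgi N
    have : 0 ≤ ∫ ω in ⋃ N, Es N, g ω ∂P :=
      ge_of_tendsto htend (Filter.Eventually.of_forall hnonneg)
    rw [hlim] at this
    linarith

/-- A.e. every point visits a set of positive measure at arbitrarily large times. -/
lemma ae_frequent_visits [MeasurableSpace Ω] (P : Measure Ω) [IsProbabilityMeasure P]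
    {T : Ω → Ω} (hTerg : Ergodic T P) (hTm : Measurable T)
    {A : Set Ω} (hAm : MeasurableSet A) (hA : P A ≠ 0) :
    ∀ᵐ ω ∂P, ∀ N : ℕ, ∃ n ≥ N, T^[n] ω ∈ A := by
  have hT : MeasurePreserving T P P := hTerg.toMeasurePreserving
  set H : Set Ω := ⋂ n : ℕ, T^[n] ⁻¹' Aᶜ with hH
  have hHm : MeasurableSet H := MeasurableSet.iInter fun n => (hTm.iterate n) hAm.compl
  have hsub : H ⊆ T ⁻¹' H := by
    intro ω hω
    simp only [hH, Set.mem_iInter, Set.mem_preimage] at hω ⊢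
    intro n
    have := hω (n + 1)
    rwa [Function.iterate_succ_apply] at this
  rcases hTerg.ae_empty_or_univ_of_ae_le_preimage hHm.nullMeasurableSet
      (HasSubset.Subset.eventuallyLE hsub) with h | h
  · have hH0 : P H = 0 := by have := measure_congr h; simpa using this
    have hpre : ∀ N : ℕ, P (T^[N] ⁻¹' H) = 0 := fun N => by
      rw [(hT.iterate N).measure_preimage hHm.nullMeasurableSet]; exact hH0
    rw [ae_iff]
    refine measure_mono_null ?_ (measure_iUnion_null hpre)
    intro ω hω
    simp only [Set.mem_setOf_eq] at hω
    push_neg at hω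
    obtain ⟨N, hN⟩ := hω
    refine Set.mem_iUnion.2 ⟨N, ?_⟩
    simp only [Set.mem_preimage, hH, Set.mem_iInter]
    intro m
    rw [← Function.iterate_add_apply]
    exact hN (m + N) (Nat.le_add_left N m)
  · exfalso
    have hPH : P H = 1 := by have := measure_congr h; simpa using this
    have hsub0 : H ⊆ Aᶜ := by
      intro ω hω
      have := Set.mem_iInter.1 hω 0
      simpa using this
    have : P Aᶜ = 1 := le_antisymm prob_le_one (hPH ▸ measure_mono hsub0)
    rw [prob_compl_eq_one_iff hAm] at this
    exact hA this

lemma psum_eq_Icc (T : Ω → Ω) (f : Ω → ℝ) (n : ℕ) (ω : Ω) :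
    psum T (fun x => f (T x)) n ω = ∑ i ∈ Finset.Icc 1 n, f (T^[i] ω) := by
  rw [← Finset.Ico_add_one_right_eq_Icc, Finset.sum_Ico_eq_sum_range]
  unfold psum
  refine Finset.sum_congr rfl fun i _ => ?_
  rw [Function.iterate_add_apply]
  simp

lemma Sj_eq (T : Ω → Ω) (σ D V τ : Ω → ℝ) (n : ℕ) (ω : Ω) :
    Sj T σ D V τ n ω
      = σ (T^[n] ω) + D (T^[n] ω) + psum T (fun x => V (T x) - τ (T x)) n ω := by
  have h := psum_eq_Icc T (fun x => V x - τ x) n ω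
  unfold Sj
  rw [h, Finset.sum_sub_distrib]
  ring

def msup (T : Ω → Ω) (σ D V τ : Ω → ℝ) : ℕ → Ω → ℝ
  | 0 => fun ω => max 0 (Sj T σ D V τ 1 ω)
  | n + 1 => fun ω => max (msup T σ D V τ n ω) (Sj T σ D V τ (n + 2) ω)

lemma Sj_le_msup (T : Ω → Ω) (σ D V τ : Ω → ℝ) (n : ℕ) (ω : Ω) :
    Sj T σ D V τ (n + 1) ω ≤ msup T σ D V τ n ω := by
  cases n with
  | zero => exact le_max_right _ _
  | succ n => exact le_max_right _ _

lemma msup_le_succ (T : Ω → Ω) (σ D V τ : Ω → ℝ) (n : ℕ) (ω : Ω) :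
    msup T σ D V τ n ω ≤ msup T σ D V τ (n + 1) ω := le_max_left _ _

lemma msup_le_Minf (T : Ω → Ω) (σ D V τ : Ω → ℝ) (n : ℕ) (ω : Ω) :
    ((msup T σ D V τ n ω : ℝ) : EReal) ≤ Minf T σ D V τ ω := by
  have hj : ∀ j : ℕ, ((Sj T σ D V τ (j + 1) ω : ℝ) : EReal) ≤ Minf T σ D V τ ω := fun j =>
    le_trans (le_iSup (fun j : ℕ => ((Sj T σ D V τ (j + 1) ω : ℝ) : EReal)) j) (le_max_right _ _)
  induction n with
  | zero =>
    show ((max 0 (Sj T σ D V τ 1 ω) : ℝ) : EReal) ≤ _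
    rcases le_total (Sj T σ D V τ 1 ω) 0 with h | h
    · rw [max_eq_left h]
      exact le_trans (le_of_eq EReal.coe_zero) (le_max_left _ _)
    · rw [max_eq_right h]
      exact hj 0
  | succ n ih =>
    show ((max (msup T σ D V τ n ω) (Sj T σ D V τ (n + 2) ω) : ℝ) : EReal) ≤ _
    rcases le_total (Sj T σ D V τ (n + 2) ω) (msup T σ D V τ n ω) with h | h
    · rw [max_eq_left h]; exact ih
    · rw [max_eq_right h]; exact hj (n + 1)

/-- The pathwise induction: iterating the one-step inequality. -/
lemma key_bound (T : Ω → Ω) (σ D V τ : Ω → ℝ)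
    (hσ0 : ∀ ω, 0 ≤ σ ω) (hD0 : ∀ ω, 0 ≤ D ω) (X : Ω → ℝ) (ω : Ω)
    (hstep : ∀ k : ℕ, X (T^[k] ω) ≤ psi σ D V τ (X (T^[k + 1] ω)) (T^[k + 1] ω)) :
    ∀ n : ℕ, X ω ≤
      max (X (T^[n + 1] ω) + psum T (fun x => V (T x) - τ (T x)) (n + 1) ω)
        (msup T σ D V τ n ω) := by
  set g0 : Ω → ℝ := fun x => V (T x) - τ (T x) with hg0
  have hpsucc : ∀ n : ℕ, psum T g0 (n + 1) ω = psum T g0 n ω + (V (T^[n + 1] ω) - τ (T^[n + 1] ω)) := by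
    intro n
    rw [psum_succ]
    congr 1
    rw [hg0]
    simp only [← Function.iterate_succ_apply' T n ω]
  have hW_le : ∀ n : ℕ, psum T g0 (n + 1) ω ≤ msup T σ D V τ n ω := by
    intro n
    refine le_trans ?_ (Sj_le_msup T σ D V τ n ω)
    rw [Sj_eq]
    have := hσ0 (T^[n + 1] ω); have := hD0 (T^[n + 1] ω)
    linarith
  intro n
  induction n with
  | zero =>
    have h := (hstep 0).trans (psi_le σ D V τ (X (T^[1] ω)) (T^[1] ω))
    simp only [Function.iterate_zero_apply] at h
    refine h.trans (max_le_max ?_ ?_)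
    · have h1 : psum T g0 1 ω = V (T^[1] ω) - τ (T^[1] ω) := by
        rw [show (1 : ℕ) = 0 + 1 from rfl, hpsucc 0, psum_zero]; ring
      rw [h1]
    · show max 0 (σ (T^[1] ω) + D (T^[1] ω) + V (T^[1] ω) - τ (T^[1] ω))
        ≤ max 0 (Sj T σ D V τ 1 ω)
      have h2 : Sj T σ D V τ 1 ω
          = σ (T^[1] ω) + D (T^[1] ω) + V (T^[1] ω) - τ (T^[1] ω) := by
        rw [Sj_eq, show (1 : ℕ) = 0 + 1 from rfl, hpsucc 0, psum_zero]
        ring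
      rw [h2]
  | succ n ih =>
    refine ih.trans (max_le ?_ ((msup_le_succ T σ D V τ n ω).trans (le_max_right _ _)))
    have h := (hstep (n + 1)).trans (psi_le σ D V τ (X (T^[n + 2] ω)) (T^[n + 2] ω))
    set q1 : ℝ := X (T^[n + 2] ω) + (V (T^[n + 2] ω) - τ (T^[n + 2] ω)) with hq1
    set q2 : ℝ := σ (T^[n + 2] ω) + D (T^[n + 2] ω) + V (T^[n + 2] ω) - τ (T^[n + 2] ω) with hq2
    set W : ℝ := psum T g0 (n + 1) ω with hWdef
    have hA' : X (T^[n + 2] ω) + psum T g0 (n + 2) ω = q1 + W := by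
      rw [show n + 2 = (n + 1) + 1 from rfl, hpsucc (n + 1)]; ring
    have hSj : Sj T σ D V τ (n + 2) ω = q2 + W := by
      rw [Sj_eq, show n + 2 = (n + 1) + 1 from rfl, hpsucc (n + 1)]; ring
    have hWmsup : W ≤ msup T σ D V τ (n + 1) ω :=
      (hW_le n).trans (msup_le_succ T σ D V τ n ω)
    have hq2msup : q2 + W ≤ msup T σ D V τ (n + 1) ω := by
      rw [← hSj]; exact Sj_le_msup T σ D V τ (n + 1) ω
    have hq1max : q1 + W ≤ max (X (T^[n + 2] ω) + psum T g0 (n + 2) ω) (msup T σ D V τ (n + 1) ω) := by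
      rw [hA']; exact le_max_left _ _
    -- X (T^[n+1] ω) ≤ max q1 (max 0 q2), so add W
    rcases max_cases (q1) (max 0 q2) with ⟨he, _⟩ | ⟨he, _⟩
    · have hx : X (T^[n + 1] ω) ≤ q1 := by rw [← he]; exact h
      calc X (T^[n + 1] ω) + W ≤ q1 + W := by linarith
        _ ≤ _ := hq1max
    · have hx : X (T^[n + 1] ω) ≤ max 0 q2 := by rw [← he]; exact h
      rcases max_cases (0 : ℝ) q2 with ⟨he2, _⟩ | ⟨he2, _⟩
      · have hx2 : X (T^[n + 1] ω) ≤ 0 := by rw [he2] at hx; exact hx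
        calc X (T^[n + 1] ω) + W ≤ W := by linarith
          _ ≤ msup T σ D V τ (n + 1) ω := hWmsup
          _ ≤ _ := le_max_right _ _
      · have hx2 : X (T^[n + 1] ω) ≤ q2 := by rw [he2] at hx; exact hx
        calc X (T^[n + 1] ω) + W ≤ q2 + W := by linarith
          _ ≤ msup T σ D V τ (n + 1) ω := hq2msup
          _ ≤ _ := le_max_right _ _

/-- if E[V − τ] < 0 and X solves X ∘ θ = φ(X, ·) P-a.s., then
X ≤ M_∞ P-a.s. -/
theorem solution_le_Minf
    [MeasurableSpace Ω] (P : Measure Ω) [IsProbabilityMeasure P]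
    (θ : Ω ≃ᵐ Ω) (herg : Ergodic (⇑θ) P)
    (σ D V τ : Ω → ℝ)
    (hσm : Measurable σ) (hDm : Measurable D) (hVm : Measurable V) (hτm : Measurable τ)
    (hσ0 : ∀ ω, 0 ≤ σ ω) (hD0 : ∀ ω, 0 ≤ D ω) (hV0 : ∀ ω, 0 ≤ V ω) (hτ0 : ∀ ω, 0 ≤ τ ω)
    (hσi : Integrable σ P) (hDi : Integrable D P) (hVi : Integrable V P) (hτi : Integrable τ P)
    (hτpos : ∀ᵐ ω ∂P, 0 < τ ω)
    (hEV : ∫ ω, (V ω - τ ω) ∂P < 0)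
    (X : Ω → ℝ) (hXm : Measurable X) (hX0 : ∀ ω, 0 ≤ X ω)
    (hXsol : ∀ᵐ ω ∂P, X (θ ω) = phi σ D V τ (X ω) ω) :
    ∀ᵐ ω ∂P, ((X ω : ℝ) : EReal) ≤ Minf (⇑θ.symm) σ D V τ ω := by
  set T : Ω → Ω := ⇑θ.symm with hTdef
  have hTm : Measurable T := θ.symm.measurable
  have hTe : MeasurableEmbedding T := θ.symm.measurableEmbedding
  have hT : MeasurePreserving T P P := MeasurePreserving.symm θ herg.toMeasurePreserving
  have hTerg : Ergodic T P := by
    refine ⟨hT, ⟨fun s hs hinv => herg.toPreErgodic.aeconst_set hs ?_⟩⟩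
    have h1 : ⇑θ ⁻¹' s = ⇑θ ⁻¹' (T ⁻¹' s) := by rw [hinv]
    rwa [← Set.preimage_comp, hTdef, MeasurableEquiv.symm_comp_self, Set.preimage_id] at h1
  -- the drift function
  set f : Ω → ℝ := fun ω => V ω - τ ω with hfdef
  set g0 : Ω → ℝ := fun x => f (T x) with hg0def
  have hfm : Measurable f := hVm.sub hτm
  have hfi : Integrable f P := hVi.sub hτi
  set c : ℝ := -(∫ ω, f ω ∂P) / 2 with hcdef
  have hc : 0 < c := by
    rw [hcdef]
    have : ∫ ω, f ω ∂P < 0 := hEV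
    linarith
  set g : Ω → ℝ := fun x => g0 x + c with hgdef
  have hg0m : Measurable g0 := hfm.comp hTm
  have hg0i : Integrable g0 P := by
    have := (MeasurePreserving.integrable_comp hT hfi.aestronglyMeasurable).2 hfi
    simpa [Function.comp_def] using this
  have hgm : Measurable g := hg0m.add measurable_const
  have hgi : Integrable g P := hg0i.add (integrable_const c)
  have hgneg : ∫ ω, g ω ∂P < 0 := by
    rw [hgdef]
    rw [integral_add hg0i (integrable_const c)]
    have h1 : ∫ ω, g0 ω ∂P = ∫ ω, f ω ∂P := hT.integral_comp hTe f
    have h2 : ∫ _ω : Ω, c ∂P = c := by simp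
    have h3 : ∫ ω, f ω ∂P < 0 := hEV
    rw [h1, h2, hcdef]
    linarith
  -- a.s. bounded partial sums of g
  have hbdd := ae_bdd_psum P hTerg hTe hgm hgi hgneg
  -- choose K with positive probability that X ≤ K
  have hK : ∃ K : ℕ, P {ω | X ω ≤ (K : ℝ)} ≠ 0 := by
    by_contra hcon
    push_neg at hcon
    have h1 : P (⋃ K : ℕ, {ω | X ω ≤ (K : ℝ)}) = 0 := measure_iUnion_null hcon
    have h2 : (⋃ K : ℕ, {ω | X ω ≤ (K : ℝ)}) = Set.univ := by
      refine Set.eq_univ_iff_forall.2 fun ω => ?_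
      have hx : X ω ≤ ((⌈X ω⌉₊ : ℕ) : ℝ) := Nat.le_ceil _
      exact Set.mem_iUnion.2 ⟨⌈X ω⌉₊, hx⟩
    rw [h2] at h1
    simp at h1
  obtain ⟨K, hKpos⟩ := hK
  have hAm : MeasurableSet {ω | X ω ≤ (K : ℝ)} := measurableSet_le hXm measurable_const
  have hvisit := ae_frequent_visits P hTerg hTm hAm hKpos
  -- the a.e. one-step inequalities along the backwards orbit
  have hchain : ∀ᵐ ω ∂P, ∀ k : ℕ,
      X (T^[k] ω) ≤ psi σ D V τ (X (T^[k + 1] ω)) (T^[k + 1] ω) := by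
    set G : Set Ω := {ω | X (θ ω) = phi σ D V τ (X ω) ω} with hGdef
    have hGm : MeasurableSet G := by
      have hm1 : Measurable fun ω => X (θ ω) := hXm.comp θ.measurable
      have hm2 : Measurable fun ω => phi σ D V τ (X ω) ω := by
        unfold phi
        refine Measurable.ite (measurableSet_le hXm hDm) ?_ ?_
        · refine Measurable.ite ?_ ?_ ?_
          · exact measurableSet_lt measurable_const (((hXm.add hσm).sub hτm))
          · exact (hXm.add hσm).sub hτm
          · exact ((((hXm.add hσm).add hVm).sub hτm)).max measurable_const
        · refine Measurable.ite ?_ ?_ ?_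
          · exact measurableSet_lt measurable_const (hXm.sub hτm)
          · exact hXm.sub hτm
          · exact measurable_const
      exact measurableSet_eq_fun hm1 hm2
    have hGc : P Gᶜ = 0 := by
      rw [ae_iff] at hXsol
      convert hXsol using 2
      rfl
    have hnull : P (⋃ k : ℕ, T^[k + 1] ⁻¹' Gᶜ) = 0 := by
      refine measure_iUnion_null fun k => ?_
      rw [(hT.iterate (k + 1)).measure_preimage hGm.compl.nullMeasurableSet]
      exact hGc
    rw [ae_iff]
    refine measure_mono_null ?_ hnull
    intro ω hω
    simp only [Set.mem_setOf_eq] at hω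
    push_neg at hω
    obtain ⟨k, hk⟩ := hω
    refine Set.mem_iUnion.2 ⟨k, ?_⟩
    simp only [Set.mem_preimage, Set.mem_compl_iff, hGdef, Set.mem_setOf_eq]
    intro heq
    -- θ (T^[k+1] ω) = T^[k] ω
    have hθ : θ (T^[k + 1] ω) = T^[k] ω := by
      rw [Function.iterate_succ_apply' T k ω]
      exact θ.apply_symm_apply _
    rw [hθ] at heq
    exact absurd hk (not_lt.2 (heq.le.trans (phi_le_psi σ D V τ hV0 _ _)))
  -- combine
  filter_upwards [hchain, hbdd, hvisit] with ω hchainω hbddω hvisitω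
  obtain ⟨C, hC⟩ := hbddω
  -- choose a visiting time n with n * c > K + C
  obtain ⟨n, hnN, hnA⟩ := hvisitω (max 1 (⌈((K : ℝ) + C) / c⌉₊ + 1))
  have hn1 : 1 ≤ n := le_trans (le_max_left _ _) hnN
  have hnc : (K : ℝ) + C < n * c := by
    have h1 : ((K : ℝ) + C) / c ≤ (⌈((K : ℝ) + C) / c⌉₊ : ℝ) := Nat.le_ceil _
    have h2 : (⌈((K : ℝ) + C) / c⌉₊ + 1 : ℕ) ≤ n := le_trans (le_max_right _ _) hnN
    have h3 : ((K : ℝ) + C) / c < (n : ℝ) := by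
      have h4 : ((⌈((K : ℝ) + C) / c⌉₊ + 1 : ℕ) : ℝ) ≤ (n : ℝ) := Nat.cast_le.mpr h2
      push_cast at h4
      linarith
    calc (K : ℝ) + C = ((K : ℝ) + C) / c * c := by field_simp
      _ < n * c := by exact mul_lt_mul_of_pos_right h3 hc
  -- the partial sum bound
  have hW : psum T g0 n ω ≤ C - n * c := by
    have := hC n
    rw [hgdef] at this
    have heq : psum T (fun x => g0 x + c) n ω = psum T g0 n ω + n * c :=
      psum_add_const T g0 c n ω
    -- `g = fun x => g0 x + c` definitionally
    rw [show psum T g n ω = psum T g0 n ω + n * c from heq] at this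
    linarith
  obtain ⟨m, hm⟩ : ∃ m : ℕ, n = m + 1 := ⟨n - 1, by omega⟩
  subst hm
  have hkey := key_bound T σ D V τ hσ0 hD0 X ω hchainω m
  have hXn : X (T^[m + 1] ω) ≤ (K : ℝ) := hnA
  have hlt : X (T^[m + 1] ω) + psum T g0 (m + 1) ω < X ω := by
    have h0 : 0 ≤ X ω := hX0 ω
    have : X (T^[m + 1] ω) + psum T g0 (m + 1) ω ≤ (K : ℝ) + (C - (m + 1) * c) := by
      push_cast at hW ⊢
      linarith
    push_cast at hnc
    linarith
  have hfinal : X ω ≤ msup T σ D V τ m ω := by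
    rcases le_max_iff.1 hkey with h | h
    · exfalso
      rw [hg0def] at hlt
      exact absurd (h.trans_lt hlt) (lt_irrefl _)
    · exact h
  calc ((X ω : ℝ) : EReal) ≤ ((msup T σ D V τ m ω : ℝ) : EReal) := EReal.coe_le_coe_iff.2 hfinal
    _ ≤ Minf T σ D V τ ω := msup_le_Minf T σ D V τ m ω
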